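/- Let (V, j) be a real vector space with complex structure and ω a nondegenerate skew-symmetric bilinear form on V for which j is skew-symmetric (ω(ju, v) = −ω(u, jv)). Let Q be the endomorphism of E = V ⊕ V* with blocks Q(u+σ) = (ω♭)^{-1}(σ) + ω♭(u), where ω♭(u)(v) = ω(u, v). Then the symmetric form β_Q(x, y) = b(Q J₊ x, y) on E has signature (2n, 2·dim V − 2n) if and only if the symmetric form g(u, v) = ω(ju, v) on V has signature (n, dim V − n). In particular, under the isomorphism φ : V ⊕ V → E, φ(u, z) = u + ω♭(z), one has φ*β_Q((u,z),(v,w)) = g(u,v) + g(z,w). -/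

import Mathlib

/-- A real bilinear form `β` on `E` has signature `(p, q)`. -/
def HasSignature {E : Type*} [AddCommGroup E] [Module ℝ E]
    (β : E → E → ℝ) (p q : ℕ) : Prop :=
  ((∃ P : Submodule ℝ E, Module.finrank ℝ P = p ∧ ∀ x ∈ P, x ≠ 0 → 0 < β x x) ∧
    ∀ P : Submodule ℝ E, (∀ x ∈ P, x ≠ 0 → 0 < β x x) → Module.finrank ℝ P ≤ p) ∧
  ((∃ N : Submodule ℝ E, Module.finrank ℝ N = q ∧ ∀ x ∈ N, x ≠ 0 → β x x < 0) ∧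
    ∀ N : Submodule ℝ E, (∀ x ∈ N, x ≠ 0 → β x x < 0) → Module.finrank ℝ N ≤ q)



open Module Submodule

section helpers
variable {E E' : Type*} [AddCommGroup E] [Module ℝ E] [AddCommGroup E'] [Module ℝ E']

lemma hasSig_congr (e : E ≃ₗ[ℝ] E') (β : E → E → ℝ) (β' : E' → E' → ℝ)
    (h : ∀ x y, β' (e x) (e y) = β x y) {p q : ℕ} (hs : HasSignature β p q) :
    HasSignature β' p q := by
  obtain ⟨⟨⟨P, hPr, hPpos⟩, hPmax⟩, ⟨N, hNr, hNneg⟩, hNmax⟩ := hs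
  refine ⟨⟨⟨P.map (e : E →ₗ[ℝ] E'), ?_, ?_⟩, ?_⟩, ⟨N.map (e : E →ₗ[ℝ] E'), ?_, ?_⟩, ?_⟩
  · rw [LinearEquiv.finrank_map_eq]; exact hPr
  · rintro x hx hx0
    obtain ⟨y, hy, rfl⟩ := hx
    rw [LinearEquiv.coe_coe, h]
    exact hPpos y hy (by rintro rfl; exact hx0 (map_zero _))
  · intro P' hP'
    rw [← LinearEquiv.finrank_map_eq e.symm P']
    refine hPmax _ ?_
    rintro x ⟨y, hy, rfl⟩ hx0
    have : β' (e (e.symm y)) (e (e.symm y)) = β (e.symm y) (e.symm y) := h _ _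
    rw [e.apply_symm_apply] at this
    rw [LinearEquiv.coe_coe, ← this]
    exact hP' y hy (by rintro rfl; exact hx0 (map_zero _))
  · rw [LinearEquiv.finrank_map_eq]; exact hNr
  · rintro x hx hx0
    obtain ⟨y, hy, rfl⟩ := hx
    rw [LinearEquiv.coe_coe, h]
    exact hNneg y hy (by rintro rfl; exact hx0 (map_zero _))
  · intro N' hN'
    rw [← LinearEquiv.finrank_map_eq e.symm N']
    refine hNmax _ ?_
    rintro x ⟨y, hy, rfl⟩ hx0
    have : β' (e (e.symm y)) (e (e.symm y)) = β (e.symm y) (e.symm y) := h _ _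
    rw [e.apply_symm_apply] at this
    rw [LinearEquiv.coe_coe, ← this]
    exact hN' y hy (by rintro rfl; exact hx0 (map_zero _))

lemma finrank_le_of_proj [FiniteDimensional ℝ E] (P N : Submodule ℝ E) (h : IsCompl P N)
    (P' : Submodule ℝ E) (hdisj : ∀ x, x ∈ P' → x ∈ N → x = 0) :
    Module.finrank ℝ P' ≤ Module.finrank ℝ P := by
  have hinj : Function.Injective ((P.linearProjOfIsCompl N h).comp P'.subtype) := by
    rw [← LinearMap.ker_eq_bot, eq_bot_iff]
    rintro ⟨x, hx⟩ hker
    have : x ∈ N := (Submodule.linearProjOfIsCompl_apply_eq_zero_iff h).mp hker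
    exact Submodule.mem_bot ℝ |>.mpr (Subtype.ext (hdisj x hx this))
  exact LinearMap.finrank_le_finrank_of_injective hinj

lemma hasSig_of_isCompl [FiniteDimensional ℝ E] (β : E → E → ℝ) (P N : Submodule ℝ E)
    (h : IsCompl P N) (hP : ∀ x ∈ P, x ≠ 0 → 0 < β x x) (hN : ∀ x ∈ N, x ≠ 0 → β x x < 0) :
    HasSignature β (Module.finrank ℝ P) (Module.finrank ℝ N) := by
  refine ⟨⟨⟨P, rfl, hP⟩, fun P' hP' => ?_⟩, ⟨N, rfl, hN⟩, fun N' hN' => ?_⟩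
  · refine finrank_le_of_proj P N h P' fun x hx hxN => ?_
    by_contra hx0
    exact absurd (hP' x hx hx0) (not_lt.mpr (le_of_lt (hN x hxN hx0)))
  · refine finrank_le_of_proj N P h.symm N' fun x hx hxP => ?_
    by_contra hx0
    exact absurd (hP x hxP hx0) (not_lt.mpr (le_of_lt (hN' x hx hx0)))

lemma hasSig_unique {β : E → E → ℝ} {p q p' q' : ℕ}
    (h : HasSignature β p q) (h' : HasSignature β p' q') : p = p' ∧ q = q' := by
  obtain ⟨⟨⟨P, hP, hPp⟩, hPm⟩, ⟨N, hN, hNn⟩, hNm⟩ := h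
  obtain ⟨⟨⟨P', hP', hPp'⟩, hPm'⟩, ⟨N', hN', hNn'⟩, hNm'⟩ := h'
  exact ⟨le_antisymm (hP ▸ hPm' P hPp) (hP' ▸ hPm P' hPp'),
    le_antisymm (hN ▸ hNm' N hNn) (hN' ▸ hNm N' hNn')⟩

lemma sylvester {V : Type*} [AddCommGroup V] [Module ℝ V] [FiniteDimensional ℝ V]
    (B : LinearMap.BilinForm ℝ V) (hsymm : B.IsSymm)
    (hnd : ∀ x, (∀ y, B x y = 0) → x = 0) :
    ∃ P N : Submodule ℝ V, IsCompl P N ∧ (∀ x ∈ P, x ≠ 0 → 0 < B x x) ∧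
      (∀ x ∈ N, x ≠ 0 → B x x < 0) := by
  obtain ⟨v, hv⟩ := LinearMap.BilinForm.exists_orthogonal_basis (LinearMap.BilinForm.isSymm_iff.mp hsymm)
  have key : ∀ x y : V, B x y = ∑ i, v.repr x i * v.repr y i * B (v i) (v i) := by
    intro x y
    conv_lhs => rw [← v.sum_repr x, ← v.sum_repr y]
    simp only [map_sum, LinearMap.sum_apply, map_smul, LinearMap.smul_apply, smul_eq_mul]
    refine Finset.sum_congr rfl fun i _ => ?_
    rw [Finset.sum_eq_single i (fun k _ hk => by rw [hv hk, mul_zero])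
      (fun hi => absurd (Finset.mem_univ i) hi)]
    ring
  have hBii : ∀ i, B (v i) (v i) ≠ 0 := by
    intro i h0
    refine absurd (hnd (v i) fun y => ?_) (v.ne_zero i)
    rw [key]
    refine Finset.sum_eq_zero fun k _ => ?_
    by_cases hk : k = i
    · subst hk; rw [h0, mul_zero]
    · rw [v.repr_self, Finsupp.single_apply, if_neg (Ne.symm hk)]; ring
  set S : Set (Fin (Module.finrank ℝ V)) := {i | 0 < B (v i) (v i)} with hS
  have hzero : ∀ x : V, (∃ i, v.repr x i ≠ 0) ∨ x = 0 := by
    intro x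
    by_cases hx : x = 0
    · exact Or.inr hx
    · refine Or.inl ?_
      by_contra hc
      push_neg at hc
      exact hx (v.repr.map_eq_zero_iff.mp (by ext i; exact hc i))
  refine ⟨Submodule.span ℝ (v '' S), Submodule.span ℝ (v '' Sᶜ), ⟨?_, ?_⟩, ?_, ?_⟩
  · rw [disjoint_iff, eq_bot_iff]
    intro x hx
    have h1 := v.mem_span_image.mp hx.1
    have h2 := v.mem_span_image.mp hx.2
    rcases hzero x with ⟨i, hi⟩ | h0
    · exact absurd (h1 (Finsupp.mem_support_iff.mpr hi)) (h2 (Finsupp.mem_support_iff.mpr hi))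
    · simp [h0]
  · rw [codisjoint_iff, ← Submodule.span_union, ← Set.image_union, Set.union_compl_self,
      Set.image_univ, v.span_eq]
  · intro x hx hx0
    rw [key]
    have hsupp := v.mem_span_image.mp hx
    refine Finset.sum_pos' (fun k _ => ?_) ?_
    · by_cases hk : k ∈ S
      · exact mul_nonneg (mul_self_nonneg _) (le_of_lt hk)
      · have h0 : v.repr x k = 0 := Finsupp.notMem_support_iff.mp fun hc => hk (hsupp hc)
        rw [h0]; simp
    · obtain ⟨i, hi⟩ := (hzero x).resolve_right hx0
      exact ⟨i, Finset.mem_univ i,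
        mul_pos (mul_self_pos.mpr hi) (hsupp (Finsupp.mem_support_iff.mpr hi))⟩
  · intro x hx hx0
    have hsupp := v.mem_span_image.mp hx
    have hneg : 0 < -B x x := by
      rw [key, ← Finset.sum_neg_distrib]
      refine Finset.sum_pos' (fun k _ => ?_) ?_
      · by_cases hk : k ∈ Sᶜ
        · have hb : B (v k) (v k) ≤ 0 := not_lt.mp hk
          nlinarith [mul_self_nonneg (v.repr x k)]
        · have h0 : v.repr x k = 0 := Finsupp.notMem_support_iff.mp fun hc => hk (hsupp hc)
          rw [h0]; simp
      · obtain ⟨i, hi⟩ := (hzero x).resolve_right hx0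
        have hiS : i ∈ Sᶜ := hsupp (Finsupp.mem_support_iff.mpr hi)
        have hb : B (v i) (v i) < 0 := lt_of_le_of_ne (not_lt.mp hiS) (hBii i)
        refine ⟨i, Finset.mem_univ i, ?_⟩
        nlinarith [mul_self_pos.mpr hi]
    linarith

def submoduleProdEquiv {V W : Type*} [AddCommGroup V] [Module ℝ V] [AddCommGroup W] [Module ℝ W]
    (P : Submodule ℝ V) (Q : Submodule ℝ W) : (P.prod Q) ≃ₗ[ℝ] P × Q where
  toFun x := (⟨x.1.1, x.2.1⟩, ⟨x.1.2, x.2.2⟩)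
  invFun y := ⟨(y.1.1, y.2.1), y.1.2, y.2.2⟩
  map_add' _ _ := rfl
  map_smul' _ _ := rfl
  left_inv _ := rfl
  right_inv _ := rfl

lemma finrank_submodule_prod {V W : Type*} [AddCommGroup V] [Module ℝ V] [AddCommGroup W]
    [Module ℝ W] [FiniteDimensional ℝ V] [FiniteDimensional ℝ W]
    (P : Submodule ℝ V) (Q : Submodule ℝ W) :
    Module.finrank ℝ (P.prod Q) = Module.finrank ℝ P + Module.finrank ℝ Q := by
  rw [(submoduleProdEquiv P Q).finrank_eq, Module.finrank_prod]

lemma isCompl_prod {V : Type*} [AddCommGroup V] [Module ℝ V] {P N : Submodule ℝ V}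
    (h : IsCompl P N) : IsCompl (P.prod P) (N.prod N) := by
  constructor
  · rw [disjoint_iff, eq_bot_iff]
    rintro ⟨x1, x2⟩ hx
    have h1 : x1 = 0 := h.disjoint.le_bot ⟨hx.1.1, hx.2.1⟩
    have h2 : x2 = 0 := h.disjoint.le_bot ⟨hx.1.2, hx.2.2⟩
    simp [h1, h2]
  · rw [codisjoint_iff, eq_top_iff]
    rintro ⟨x1, x2⟩ -
    have h1 : x1 ∈ P ⊔ N := h.codisjoint.eq_top ▸ Submodule.mem_top
    have h2 : x2 ∈ P ⊔ N := h.codisjoint.eq_top ▸ Submodule.mem_top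
    obtain ⟨a, ha, b, hb, rfl⟩ := Submodule.mem_sup.mp h1
    obtain ⟨c, hc, d, hd, rfl⟩ := Submodule.mem_sup.mp h2
    exact Submodule.mem_sup.mpr ⟨(a, c), ⟨ha, hc⟩, (b, d), ⟨hb, hd⟩, rfl⟩
end helpers


/-- for `ω` symplectic with `j` skew-symmetric for `ω`, and
`Q(u+σ) = (ω♭)⁻¹σ + ω♭u`, the form `β_Q(x,y) = b(Q J₊ x, y)` has signature
`(2n, 2 dim V - 2n)` iff `g(u,v) = ω(ju,v)` has signature `(n, dim V - n)`;
and under `φ(u,z) = u + ω♭z` one has `φ*β_Q((u,z),(v,w)) = g(u,v) + g(z,w)`. -/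
theorem stmt7 (V : Type*) [AddCommGroup V] [Module ℝ V] [FiniteDimensional ℝ V]
    (j : V →ₗ[ℝ] V) (hj : ∀ v, j (j v) = -v)
    (ωb : V →ₗ[ℝ] Module.Dual ℝ V)
    (hωskew : ∀ u v, ωb u v = - ωb v u)
    (p : Module.Dual ℝ V →ₗ[ℝ] V)
    (hp1 : ∀ σ, ωb (p σ) = σ) (hp2 : ∀ u, p (ωb u) = u)
    (hjskew : ∀ u v, ωb (j u) v = - ωb u (j v))
    (g : V → V → ℝ) (hg : ∀ u v, g u v = ωb (j u) v)
    (b : (V × Module.Dual ℝ V) → (V × Module.Dual ℝ V) → ℝ)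
    (hb : ∀ x y, b x y = y.2 x.1 + x.2 y.1)
    (J : (V × Module.Dual ℝ V) → (V × Module.Dual ℝ V))
    (hJ : ∀ x, J x = (j x.1, j.dualMap x.2))
    (Q : (V × Module.Dual ℝ V) → (V × Module.Dual ℝ V))
    (hQ : ∀ x, Q x = (p x.2, ωb x.1))
    (β : (V × Module.Dual ℝ V) → (V × Module.Dual ℝ V) → ℝ)
    (hβ : ∀ x y, β x y = b (Q (J x)) y) :
    (∀ n : ℕ, HasSignature β (2 * n) (2 * Module.finrank ℝ V - 2 * n) ↔
      HasSignature g n (Module.finrank ℝ V - n)) ∧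
    (∀ u z v w : V, β (u, ωb z) (v, ωb w) = g u v + g z w) := by
  have hβφ : ∀ u z v w : V, β (u, ωb z) (v, ωb w) = g u v + g z w := by
    intro u z v w
    rw [hβ, hJ, hQ, hb]
    have h1 : j.dualMap (ωb z) = ωb (-(j z)) := by
      ext x
      rw [LinearMap.dualMap_apply, map_neg]
      have := hjskew z x
      simp only [LinearMap.neg_apply]
      linarith
    simp only [h1, hp2 (-(j z))]
    have h2 : ωb w (-(j z)) = g z w := by
      rw [map_neg, hg, hωskew (j z) w]
    rw [h2, ← hg]
    ring
  refine ⟨?_, hβφ⟩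
  -- the bilinear form B = g
  set B : LinearMap.BilinForm ℝ V := ωb ∘ₗ j with hB
  have hBg : ∀ u v, B u v = g u v := fun u v => (hg u v).symm
  have hBsymm : B.IsSymm := by
    refine ⟨fun u v => ?_⟩
    simp only [RingHom.id_apply, LinearMap.comp_apply, hB]
    rw [hjskew u v, hωskew (j v) u]
  have hBnd : ∀ x, (∀ y, B x y = 0) → x = 0 := by
    intro x hx
    have hωjx : ωb (j x) = 0 := LinearMap.ext fun y => hx y
    have hjx : j x = 0 := by rw [← hp2 (j x), hωjx, map_zero]
    have := hj x
    rw [hjx, map_zero] at this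
    exact (neg_eq_zero.mp this.symm)
  obtain ⟨P, N, hc, hPpos, hNneg⟩ := sylvester B hBsymm hBnd
  have hsum : Module.finrank ℝ P + Module.finrank ℝ N = Module.finrank ℝ V :=
    Submodule.finrank_add_eq_of_isCompl hc
  have hgP : ∀ x ∈ P, x ≠ 0 → 0 < g x x := fun x hx h0 => hBg x x ▸ hPpos x hx h0
  have hgN : ∀ x ∈ N, x ≠ 0 → g x x < 0 := fun x hx h0 => hBg x x ▸ hNneg x hx h0
  have hgsig : HasSignature g (Module.finrank ℝ P) (Module.finrank ℝ N) :=
    hasSig_of_isCompl g P N hc hgP hgN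
  -- the product form
  set G : (V × V) → (V × V) → ℝ := fun x y => g x.1 y.1 + g x.2 y.2 with hG
  have hg00 : g 0 0 = 0 := by simp [hg]
  have hGP : ∀ x ∈ P.prod P, x ≠ 0 → 0 < G x x := by
    rintro ⟨x1, x2⟩ hx h0
    have hx1 : x1 ∈ P := hx.1
    have hx2 : x2 ∈ P := hx.2
    have hn1 : 0 ≤ g x1 x1 := by
      rcases eq_or_ne x1 0 with rfl | h; · rw [hg00]
      · exact le_of_lt (hgP x1 hx1 h)
    have hn2 : 0 ≤ g x2 x2 := by
      rcases eq_or_ne x2 0 with rfl | h; · rw [hg00]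
      · exact le_of_lt (hgP x2 hx2 h)
    have : x1 ≠ 0 ∨ x2 ≠ 0 := by
      by_contra hcon
      push_neg at hcon
      exact h0 (Prod.ext hcon.1 hcon.2)
    rcases this with h | h
    · have := hgP x1 hx1 h
      simp only [hG]; linarith
    · have := hgP x2 hx2 h
      simp only [hG]; linarith
  have hGN : ∀ x ∈ N.prod N, x ≠ 0 → G x x < 0 := by
    rintro ⟨x1, x2⟩ hx h0
    have hx1 : x1 ∈ N := hx.1
    have hx2 : x2 ∈ N := hx.2
    have hn1 : g x1 x1 ≤ 0 := by
      rcases eq_or_ne x1 0 with rfl | h; · rw [hg00]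
      · exact le_of_lt (hgN x1 hx1 h)
    have hn2 : g x2 x2 ≤ 0 := by
      rcases eq_or_ne x2 0 with rfl | h; · rw [hg00]
      · exact le_of_lt (hgN x2 hx2 h)
    have : x1 ≠ 0 ∨ x2 ≠ 0 := by
      by_contra hcon
      push_neg at hcon
      exact h0 (Prod.ext hcon.1 hcon.2)
    rcases this with h | h
    · have := hgN x1 hx1 h
      simp only [hG]; linarith
    · have := hgN x2 hx2 h
      simp only [hG]; linarith
  have hGsig : HasSignature G (2 * Module.finrank ℝ P) (2 * Module.finrank ℝ N) := by
    have := hasSig_of_isCompl G (P.prod P) (N.prod N) (isCompl_prod hc) hGP hGN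
    rwa [finrank_submodule_prod, finrank_submodule_prod, ← two_mul, ← two_mul] at this
  -- transport along φ
  let ωe : V ≃ₗ[ℝ] Module.Dual ℝ V :=
    LinearEquiv.ofLinear ωb p (LinearMap.ext fun σ => hp1 σ) (LinearMap.ext fun u => hp2 u)
  let φ : (V × V) ≃ₗ[ℝ] (V × Module.Dual ℝ V) := (LinearEquiv.refl ℝ V).prodCongr ωe
  have hφ : ∀ x y : V × V, β (φ x) (φ y) = G x y := by
    rintro ⟨u, z⟩ ⟨v, w⟩
    exact hβφ u z v w
  have hβsig : HasSignature β (2 * Module.finrank ℝ P) (2 * Module.finrank ℝ N) :=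
    hasSig_congr φ G β hφ hGsig
  intro n
  constructor
  · intro hn
    obtain ⟨h1, h2⟩ := hasSig_unique hn hβsig
    have hPn : Module.finrank ℝ P = n := by omega
    have hNn : Module.finrank ℝ N = Module.finrank ℝ V - n := by omega
    rwa [hPn, hNn] at hgsig
  · intro hn
    obtain ⟨h1, h2⟩ := hasSig_unique hn hgsig
    have h2n : 2 * n = 2 * Module.finrank ℝ P := by omega
    have h2q : 2 * Module.finrank ℝ V - 2 * n = 2 * Module.finrank ℝ N := by omega
    rwa [h2q, h2n]
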